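/- For all positive integers n and m with n ≤ m, ⌊n/2⌋ + 1 hunters have a winning strategy on the (n×m)-grid; that is, the hunter number of the (n×m)-grid is at most ⌊n/2⌋ + 1. -/

import Mathlib

/-- A rabbit's strategy on `G`: `r i` is the rabbit's position after the `i`-th shot
(`r 0` is the initial position); the rabbit always moves along an edge. -/
def RabbitStrategy {V : Type*} (G : SimpleGraph V) (r : ℕ → V) : Prop :=
  ∀ i : ℕ, G.Adj (r i) (r (i + 1))

/-- `k` hunters have a winning strategy on `G` with respect to `S`: there is a sequence of
shots `Hs` (where `Hs i` is the set `H_{i+1}` of vertices shot in round `i + 1`), each of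
size at most `k`, such that every rabbit starting in `S` is eventually shot
(`r i ∈ Hs i` expresses the paper's condition `r_{i-1} ∈ H_i` for some `i ≥ 1`). -/
def HuntersWinWrt {V : Type*} (G : SimpleGraph V) (k : ℕ) (S : Set V) : Prop :=
  ∃ Hs : ℕ → Finset V, (∀ i, (Hs i).card ≤ k) ∧
    ∀ r : ℕ → V, RabbitStrategy G r → r 0 ∈ S → ∃ i, r i ∈ Hs i

/-- `k` hunters have a winning strategy on `G`. -/
def HuntersWin {V : Type*} (G : SimpleGraph V) (k : ℕ) : Prop :=
  HuntersWinWrt G k Set.univ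

/-- The hunter number `h(G)`: the minimum number of hunters having a winning strategy. -/
noncomputable def hunterNumber {V : Type*} (G : SimpleGraph V) : ℕ :=
  sInf {k | HuntersWin G k}

/-- Vertices of the (n × m)-grid: pairs (x, y) with 1 ≤ x ≤ n and 1 ≤ y ≤ m. -/
abbrev GridV (n m : ℕ) := {p : ℕ × ℕ // 1 ≤ p.1 ∧ p.1 ≤ n ∧ 1 ≤ p.2 ∧ p.2 ≤ m}

/-- The (n × m)-grid graph: (x,y) and (x',y') are adjacent iff |x-x'| + |y-y'| = 1. -/
def gridGraph (n m : ℕ) : SimpleGraph (GridV n m) where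
  Adj u v := |(u.val.1 : ℤ) - v.val.1| + |(u.val.2 : ℤ) - v.val.2| = 1
  symm := by
    constructor
    intro u v h
    rw [abs_sub_comm (u.val.1 : ℤ) (v.val.1 : ℤ), abs_sub_comm (u.val.2 : ℤ) (v.val.2 : ℤ)] at h
    exact h
  loopless := by
    constructor
    intro u h
    simp at h

namespace HunterGridAux

/-- The shot set at wall-stage `t` with parity offset `c`. -/
def shots (n m t c : ℕ) : Finset (GridV n m) :=
  Finset.subtype _ (((Finset.Icc 1 n) ×ˢ (Finset.Icc 1 m)).filter
    (fun p => ((p.2 = t / n + 2 ∧ p.1 ≤ t % n + 1) ∨ (p.2 = t / n + 1 ∧ t % n + 1 ≤ p.1)) ∧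
      (p.1 + p.2 + c) % 2 = 0))

lemma mem_shots {n m t c : ℕ} {v : GridV n m} :
    v ∈ shots n m t c ↔
      ((v.val.2 = t / n + 2 ∧ v.val.1 ≤ t % n + 1) ∨
        (v.val.2 = t / n + 1 ∧ t % n + 1 ≤ v.val.1)) ∧
      (v.val.1 + v.val.2 + c) % 2 = 0 := by
  obtain ⟨hx1, hxn, hy1, hym⟩ := v.2
  simp only [shots, Finset.mem_subtype, Finset.mem_filter, Finset.mem_product, Finset.mem_Icc]
  tauto

lemma shots_card {n m : ℕ} (t c : ℕ) : (shots n m t c).card ≤ n / 2 + 1 := by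
  have h := Finset.card_le_card_of_injOn
    (f := fun v : GridV n m => ((if v.val.2 = t / n + 2 then v.val.1 else v.val.1 + 1) - 1) / 2)
    (s := shots n m t c) (t := Finset.range (n / 2 + 1)) ?_ ?_
  · simpa using h
  · intro v hv
    rw [Finset.mem_coe, mem_shots] at hv
    obtain ⟨hx1, hxn, hy1, hym⟩ := v.2
    show ((if v.val.2 = t / n + 2 then v.val.1 else v.val.1 + 1) - 1) / 2 ∈
      Finset.range (n / 2 + 1)
    rcases hv.1 with ⟨h1, h2⟩ | ⟨h1, h2⟩
    · rw [if_pos h1, Finset.mem_range]; omega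
    · rw [if_neg (by omega), Finset.mem_range]; omega
  · intro v hv w hw heq
    simp only [Finset.mem_coe, mem_shots] at hv hw
    obtain ⟨hvx1, hvxn, hvy1, hvym⟩ := v.2
    obtain ⟨hwx1, hwxn, hwy1, hwym⟩ := w.2
    obtain ⟨hv1, hv2⟩ := hv
    obtain ⟨hw1, hw2⟩ := hw
    have heq' : ((if v.val.2 = t / n + 2 then v.val.1 else v.val.1 + 1) - 1) / 2 =
        ((if w.val.2 = t / n + 2 then w.val.1 else w.val.1 + 1) - 1) / 2 := heq
    have : v.val.1 = w.val.1 ∧ v.val.2 = w.val.2 := by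
      rcases hv1 with ⟨a1, a2⟩ | ⟨a1, a2⟩ <;> rcases hw1 with ⟨b1, b2⟩ | ⟨b1, b2⟩
      · rw [if_pos a1, if_pos b1] at heq'; omega
      · rw [if_pos a1, if_neg (by omega)] at heq'; omega
      · rw [if_neg (by omega), if_pos b1] at heq'; omega
      · rw [if_neg (by omega), if_neg (by omega)] at heq'; omega
    exact Subtype.ext (Prod.ext_iff.mpr ⟨this.1, this.2⟩)

lemma adj_cases {n m : ℕ} {u v : GridV n m} (h : (gridGraph n m).Adj u v) :
    (u.val.1 = v.val.1 ∧ (u.val.2 + 1 = v.val.2 ∨ v.val.2 + 1 = u.val.2)) ∨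
    (u.val.2 = v.val.2 ∧ (u.val.1 + 1 = v.val.1 ∨ v.val.1 + 1 = u.val.1)) := by
  have h' : |(u.val.1 : ℤ) - v.val.1| + |(u.val.2 : ℤ) - v.val.2| = 1 := h
  rcases abs_cases ((u.val.1 : ℤ) - v.val.1) with ⟨e1, _⟩ | ⟨e1, _⟩ <;>
    rcases abs_cases ((u.val.2 : ℤ) - v.val.2) with ⟨e2, _⟩ | ⟨e2, _⟩ <;>
      rw [e1, e2] at h' <;> omega

lemma parity_inv {n m : ℕ} (r : ℕ → GridV n m) (hr : RabbitStrategy (gridGraph n m) r) :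
    ∀ t, ((r t).val.1 + (r t).val.2 + t) % 2 = ((r 0).val.1 + (r 0).val.2) % 2 := by
  intro t
  induction t with
  | zero => rfl
  | succ t ih =>
    have := adj_cases (hr t)
    omega

lemma lex_lt {n u v j a : ℕ} (hv : v < n) (ha : a < n) :
    u * n + v < j * n + a ↔ (u < j ∨ (u = j ∧ v < a)) := by
  constructor
  · intro h
    rcases lt_trichotomy u j with h1 | h1 | h1
    · exact Or.inl h1
    · subst h1; exact Or.inr ⟨rfl, by omega⟩
    · exfalso
      have h2 : (j + 1) * n ≤ u * n := Nat.mul_le_mul_right n (by omega)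
      have h3 : (j + 1) * n = j * n + n := by ring
      omega
  · rintro (h1 | ⟨rfl, h2⟩)
    · have h2 : (u + 1) * n ≤ j * n := Nat.mul_le_mul_right n h1
      have h3 : (u + 1) * n = u * n + n := by ring
      omega
    · omega

lemma lex_le {n u v j a : ℕ} (hv : v < n) (ha : a < n) :
    u * n + v ≤ j * n + a ↔ (u < j ∨ (u = j ∧ v ≤ a)) := by
  constructor
  · intro h
    rcases lt_trichotomy u j with h1 | h1 | h1
    · exact Or.inl h1
    · subst h1; exact Or.inr ⟨rfl, by omega⟩
    · exfalso
      have h2 : (j + 1) * n ≤ u * n := Nat.mul_le_mul_right n (by omega)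
      have h3 : (j + 1) * n = j * n + n := by ring
      omega
  · rintro (h1 | ⟨rfl, h2⟩)
    · have h2 : (u + 1) * n ≤ j * n := Nat.mul_le_mul_right n h1
      have h3 : (u + 1) * n = u * n + n := by ring
      omega
    · omega

/-- Key step: if the rabbit is at `w` (not yet in the cleared region) and moves to `v`
inside the next cleared region, then `w` was on the wall. -/
lemma step {n m : ℕ} (hn : 1 ≤ n) {j a : ℕ} (ha : a < n) {v w : GridV n m}
    (hadj : (gridGraph n m).Adj w v)
    (hw : j * n + a ≤ (w.val.2 - 1) * n + (w.val.1 - 1))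
    (hv : (v.val.2 - 1) * n + (v.val.1 - 1) ≤ j * n + a) :
    (w.val.2 = j + 2 ∧ w.val.1 ≤ a + 1) ∨ (w.val.2 = j + 1 ∧ a + 1 ≤ w.val.1) := by
  obtain ⟨hwx1, hwxn, hwy1, hwym⟩ := w.2
  obtain ⟨hvx1, hvxn, hvy1, hvym⟩ := v.2
  have hw' : ¬ (w.val.2 - 1 < j ∨ (w.val.2 - 1 = j ∧ w.val.1 - 1 < a)) := by
    intro hcontra
    have := (lex_lt (show w.val.1 - 1 < n by omega) ha).mpr hcontra
    omega
  have hv' : v.val.2 - 1 < j ∨ (v.val.2 - 1 = j ∧ v.val.1 - 1 ≤ a) :=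
    (lex_le (show v.val.1 - 1 < n by omega) ha).mp hv
  have hadj' := adj_cases hadj
  omega

/-- Core lemma: the sweep with parity offset `c₀` catches every rabbit whose starting
parity matches `c₀`. -/
lemma core {n m : ℕ} (hn : 1 ≤ n) (hm : 1 ≤ m) (c₀ : ℕ) (r : ℕ → GridV n m)
    (hr : RabbitStrategy (gridGraph n m) r)
    (hq : ((r 0).val.1 + (r 0).val.2 + c₀) % 2 = 0) :
    ∃ i, i < n * m ∧ r i ∈ shots n m i (i + c₀) := by
  by_contra hcon
  push_neg at hcon
  have key : ∀ t, t ≤ n * m → t ≤ ((r t).val.2 - 1) * n + ((r t).val.1 - 1) := by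
    intro t
    induction t with
    | zero => intro _; exact Nat.zero_le _
    | succ t ih =>
      intro hle
      have ht : t < n * m := by omega
      have h1 := ih (le_of_lt ht)
      by_contra h2
      push_neg at h2
      -- decompose t = (t/n)*n + t%n
      have hdm : (t / n) * n + t % n = t := by
        rw [mul_comm]; exact Nat.div_add_mod t n
      have ha : t % n < n := Nat.mod_lt _ hn
      have hwall := step hn ha (hr t)
        (by rw [hdm]; exact h1) (by rw [hdm]; omega)
      apply hcon t ht
      rw [mem_shots]
      refine ⟨hwall, ?_⟩
      have hp := parity_inv r hr t
      omega
  have hfin := key (n * m) le_rfl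
  obtain ⟨hx1, hxn, hy1, hym⟩ := (r (n * m)).2
  have h5 : ((r (n * m)).val.2 - 1) * n ≤ (m - 1) * n :=
    Nat.mul_le_mul_right n (by omega)
  have h6 : (m - 1) * n + n = m * n := by
    have hm1 : m - 1 + 1 = m := by omega
    calc (m - 1) * n + n = (m - 1 + 1) * n := by ring
    _ = m * n := by rw [hm1]
  have hcomm : n * m = m * n := mul_comm n m
  omega

end HunterGridAux

/-- For all positive integers n ≤ m, ⌊n/2⌋ + 1 hunters have a winning strategy on the
(n×m)-grid; that is, the hunter number of the (n×m)-grid is at most ⌊n/2⌋ + 1. -/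
theorem hunterNumber_grid_upper (n m : ℕ) (hn : 1 ≤ n) (hnm : n ≤ m) :
    HuntersWin (gridGraph n m) (n / 2 + 1) ∧ hunterNumber (gridGraph n m) ≤ n / 2 + 1 := by
  have hm : 1 ≤ m := le_trans hn hnm
  have hWin : HuntersWin (gridGraph n m) (n / 2 + 1) := by
    refine ⟨fun t => if t < n * m then HunterGridAux.shots n m t t
      else if t < 2 * (n * m) then HunterGridAux.shots n m (t - n * m) (t + 1) else ∅, ?_, ?_⟩
    · intro i
      dsimp only
      split_ifs
      · exact HunterGridAux.shots_card _ _
      · exact HunterGridAux.shots_card _ _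
      · simp
    · intro r hr _
      by_cases hq : ((r 0).val.1 + (r 0).val.2) % 2 = 0
      · obtain ⟨i, hi, hmem⟩ := HunterGridAux.core hn hm 0 r hr (by omega)
        refine ⟨i, ?_⟩
        dsimp only
        rw [if_pos hi]
        rw [Nat.add_zero] at hmem
        exact hmem
      · have hq2 : ((r (n * m)).val.1 + (r (n * m)).val.2 + (1 + n * m)) % 2 = 0 := by
          have hp := HunterGridAux.parity_inv r hr (n * m)
          omega
        obtain ⟨i, hi, hmem⟩ := HunterGridAux.core hn hm (1 + n * m)
          (fun s => r (n * m + s)) (fun s => hr (n * m + s)) hq2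
        refine ⟨n * m + i, ?_⟩
        dsimp only
        rw [if_neg (by omega), if_pos (by omega)]
        have e1 : n * m + i - n * m = i := by omega
        have e2 : n * m + i + 1 = i + (1 + n * m) := by omega
        rw [e1, e2]
        exact hmem
  exact ⟨hWin, Nat.sInf_le hWin⟩
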